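/- Let R be a commutative Noetherian local ring with maximal ideal 𝔪, let N be a finitely generated R-module, and let t ≥ 1. Then there exists i₀ ≥ 0 such that for every i ≥ i₀ the homomorphism Tor_t^R(N, R/𝔪^i) → Tor_t^R(N, R/𝔪^{i−i₀}) induced by the canonical surjection R/𝔪^i → R/𝔪^{i−i₀} is the zero map; that is, the inverse tower (Tor_t^R(N, R/𝔪^j))_j is nilpotent. -/

import Mathlib

open CategoryTheory

/-- For `a ≤ b`, the canonical surjection `R ⧸ I^b → R ⧸ I^a` as an `R`-linear map. -/
noncomputable def quotPowMap {R : Type*} [CommRing R] (I : Ideal R) {a b : ℕ} (h : a ≤ b) :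
    (R ⧸ I ^ b) →ₗ[R] (R ⧸ I ^ a) :=
  Submodule.mapQ (I ^ b) (I ^ a) LinearMap.id
    (fun _ hx => Ideal.pow_le_pow_right h hx)

open CategoryTheory.Limits MonoidalCategory HomologicalComplex

universe u

namespace TorNilp

variable {R : Type u} [CommRing R]

noncomputable abbrev res (M : ModuleCat.{u} R) : ProjectiveResolution M :=
  (HasProjectiveResolution.out (Z := M)).some

/-- derived map zero iff homology map of a lift is zero -/
lemma derived_map_zero_iff (F : ModuleCat.{u} R ⥤ ModuleCat.{u} R) [F.Additive] (n : ℕ)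
    {M M' : ModuleCat.{u} R} (f : M ⟶ M')
    (P : ProjectiveResolution M) (Q : ProjectiveResolution M') :
    (F.leftDerived n).map f = 0 ↔
      HomologicalComplex.homologyMap
        ((F.mapHomologicalComplex _).map (ProjectiveResolution.lift f P Q)) n = 0 := by
  rw [F.leftDerived_map_eq n f (ProjectiveResolution.lift f P Q)
    (ProjectiveResolution.lift_commutes f P Q)]
  rw [Preadditive.IsIso.comp_left_eq_zero, Preadditive.IsIso.comp_right_eq_zero]
  rfl

variable {K F N : ModuleCat.{u} R} (ι : K ⟶ F) (p : F ⟶ N)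

/-- The short complex of chain complexes `K ⊗ P → F ⊗ P → N ⊗ P`. -/
noncomputable def ses (w : ι ≫ p = 0) {M : ModuleCat.{u} R} (P : ProjectiveResolution M) :
    ShortComplex (HomologicalComplex (ModuleCat.{u} R) (ComplexShape.down ℕ)) :=
  ShortComplex.mk
    ((NatTrans.mapHomologicalComplex ((tensoringLeft (ModuleCat.{u} R)).map ι)
        (ComplexShape.down ℕ)).app P.complex)
    ((NatTrans.mapHomologicalComplex ((tensoringLeft (ModuleCat.{u} R)).map p)
        (ComplexShape.down ℕ)).app P.complex)
    (by
      ext n : 1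
      simp
      exact (comp_whiskerRight ι p _).symm.trans (by rw [w]; simp; rfl))

lemma flat_of_projective_moduleCat (X : ModuleCat.{u} R) [Projective X] : Module.Flat R X := by
  have : Module.Projective R X := (IsProjective.iff_projective (R := R) X).mpr ‹Projective X›
  infer_instance

lemma ses_map_eval (w : ι ≫ p = 0) {M : ModuleCat.{u} R} (P : ProjectiveResolution M) (n : ℕ) :
    (ses ι p w P).map (HomologicalComplex.eval _ _ n) =
      (ShortComplex.mk ι p w).map (tensorRight (P.complex.X n)) := rfl

lemma ses_shortExact (w : ι ≫ p = 0) (hse : (ShortComplex.mk ι p w).ShortExact)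
    {M : ModuleCat.{u} R} (P : ProjectiveResolution M) : (ses ι p w P).ShortExact := by
  apply HomologicalComplex.shortExact_of_degreewise_shortExact
  intro n
  have : Module.Flat R (P.complex.X n) := flat_of_projective_moduleCat _
  rw [ses_map_eval]
  have hinj : Function.Injective ι := (ModuleCat.mono_iff_injective ι).mp hse.mono_f
  have hsurj : Function.Surjective p := (ModuleCat.epi_iff_surjective p).mp hse.epi_g
  exact
    { exact := Module.Flat.rTensor_shortComplex_exact _ _ hse.exact
      mono_f := (ModuleCat.mono_iff_injective _).mpr
        (Module.Flat.rTensor_preserves_injective_linearMap (M := P.complex.X n) ι.hom hinj)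
      epi_g := (ModuleCat.epi_iff_surjective _).mpr (LinearMap.rTensor_surjective _ (g := p.hom) hsurj) }

lemma isZero_homology_tensor_flat (A : ModuleCat.{u} R) [Module.Flat R A]
    {M : ModuleCat.{u} R} (P : ProjectiveResolution M) (n : ℕ) :
    IsZero ((((tensorLeft A).mapHomologicalComplex
      (ComplexShape.down ℕ)).obj P.complex).homology (n + 1)) := by
  rw [← HomologicalComplex.exactAt_iff_isZero_homology]
  rw [HomologicalComplex.exactAt_iff' _ (n + 2) (n + 1) n (by simp) (by simp)]
  refine ShortComplex.exact_of_iso ?_ (Module.Flat.lTensor_shortComplex_exact A _ (P.exact_succ n))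
  exact ShortComplex.isoMk (Iso.refl _) (Iso.refl _) (Iso.refl _)
    ((Category.id_comp _).trans (Category.comp_id _).symm) ((Category.id_comp _).trans (Category.comp_id _).symm)

/-- The morphism of short exact complexes induced by a lift of `f`. -/
@[simps]
noncomputable def sesHom (w : ι ≫ p = 0) {M M' : ModuleCat.{u} R} (f : M ⟶ M')
    (P : ProjectiveResolution M) (Q : ProjectiveResolution M') :
    ses ι p w P ⟶ ses ι p w Q where
  τ₁ := (((tensoringLeft (ModuleCat.{u} R)).obj K).mapHomologicalComplex _).map
    (ProjectiveResolution.lift f P Q)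
  τ₂ := (((tensoringLeft (ModuleCat.{u} R)).obj F).mapHomologicalComplex _).map
    (ProjectiveResolution.lift f P Q)
  τ₃ := (((tensoringLeft (ModuleCat.{u} R)).obj N).mapHomologicalComplex _).map
    (ProjectiveResolution.lift f P Q)
  comm₁₂ := NatTrans.mapHomologicalComplex_naturality ((tensoringLeft (ModuleCat.{u} R)).map ι)
    (ProjectiveResolution.lift f P Q)
  comm₂₃ := NatTrans.mapHomologicalComplex_naturality ((tensoringLeft (ModuleCat.{u} R)).map p)
    (ProjectiveResolution.lift f P Q)

/-- The dimension-shifting step. -/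
lemma homologyMap_succ_zero (w : ι ≫ p = 0) (hse : (ShortComplex.mk ι p w).ShortExact)
    [Module.Flat R F]
    {M M' : ModuleCat.{u} R} (f : M ⟶ M')
    (P : ProjectiveResolution M) (Q : ProjectiveResolution M') (s : ℕ)
    (h1 : HomologicalComplex.homologyMap (sesHom ι p w f P Q).τ₁ s = 0) :
    HomologicalComplex.homologyMap (sesHom ι p w f P Q).τ₃ (s + 1) = 0 := by
  have hP := ses_shortExact ι p w hse P
  have hQ := ses_shortExact ι p w hse Q
  have hrel : (ComplexShape.down ℕ).Rel (s + 1) s := by simp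
  have hnat := HomologicalComplex.HomologySequence.δ_naturality
    (sesHom ι p w f P Q) hP hQ (s + 1) s hrel
  have hz : IsZero ((ses ι p w Q).X₂.homology (s + 1)) := isZero_homology_tensor_flat F Q s
  have hmono : Mono (hQ.δ (s + 1) s hrel) :=
    (hQ.homology_exact₃ (s + 1) s hrel).mono_g (hz.eq_of_src _ _)
  rw [← cancel_mono (hQ.δ (s + 1) s hrel), ← hnat, h1, comp_zero, zero_comp]

/-- The canonical map `H₀(A ⊗ P) ⟶ A ⊗ M`. -/
noncomputable def alpha (A : ModuleCat.{u} R) {M : ModuleCat.{u} R}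
    (P : ProjectiveResolution M) :
    ((((tensoringLeft (ModuleCat.{u} R)).obj A).mapHomologicalComplex
      (ComplexShape.down ℕ)).obj P.complex).homology 0 ⟶
      ((tensoringLeft (ModuleCat.{u} R)).obj A).obj M :=
  HomologicalComplex.homologyι _ 0 ≫
    HomologicalComplex.descOpcycles _ (((tensoringLeft (ModuleCat.{u} R)).obj A).map (P.π.f 0)) 1
      (by simp)
      (by
        show ((tensoringLeft (ModuleCat.{u} R)).obj A).map (P.complex.d 1 0) ≫ _ = _
        exact (Functor.map_comp _ _ _).symm.trans
          ((congrArg _ P.complex_d_comp_π_f_zero).trans (Functor.map_zero _ _ _)))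

lemma isIso_alpha (A : ModuleCat.{u} R) {M : ModuleCat.{u} R} (P : ProjectiveResolution M) :
    IsIso (alpha A P) := by
  have hsurj : Function.Surjective (P.π.f 0) :=
    (ModuleCat.epi_iff_surjective (P.π.f 0)).mp inferInstance
  have hex : Function.Exact (P.complex.d 1 0) (P.π.f 0) := by
    rw [LinearMap.exact_iff]
    have := ShortComplex.exact_of_g_is_cokernel
      (S := ShortComplex.mk (P.complex.d 1 0) (P.π.f 0) P.complex_d_comp_π_f_zero)
      P.isColimitCokernelCofork
    rw [ShortComplex.moduleCat_exact_iff_range_eq_ker] at this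
    exact this.symm
  have hT : Function.Exact
      (LinearMap.lTensor A (P.complex.d 1 0).hom) (LinearMap.lTensor A (P.π.f 0).hom) :=
    lTensor_exact A hex hsurj
  have : IsIso (HomologicalComplex.descOpcycles
      ((((tensoringLeft (ModuleCat.{u} R)).obj A).mapHomologicalComplex
        (ComplexShape.down ℕ)).obj P.complex)
      (((tensoringLeft (ModuleCat.{u} R)).obj A).map (P.π.f 0)) 1 (by simp)
      (by
        show ((tensoringLeft (ModuleCat.{u} R)).obj A).map (P.complex.d 1 0) ≫ _ = _
        exact (Functor.map_comp _ _ _).symm.trans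
          ((congrArg _ P.complex_d_comp_π_f_zero).trans (Functor.map_zero _ _ _)))) := by
    erw [ChainComplex.isIso_descOpcycles_iff]
    constructor
    · rw [ShortComplex.moduleCat_exact_iff]
      intro x hx
      exact ((hT x).mp hx).imp (fun y hy => hy)
    · exact (ModuleCat.epi_iff_surjective _).mpr (LinearMap.lTensor_surjective A hsurj)
  unfold alpha
  exact @IsIso.comp_isIso _ _ _ _ _ _ _ inferInstance this

lemma homologyMap_alpha (A : ModuleCat.{u} R) {M M' : ModuleCat.{u} R} (f : M ⟶ M')
    (P : ProjectiveResolution M) (Q : ProjectiveResolution M') :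
    HomologicalComplex.homologyMap
      ((((tensoringLeft (ModuleCat.{u} R)).obj A).mapHomologicalComplex
        (ComplexShape.down ℕ)).map (ProjectiveResolution.lift f P Q)) 0 ≫ alpha A Q =
      alpha A P ≫ ((tensoringLeft (ModuleCat.{u} R)).obj A).map f := by
  unfold alpha
  rw [HomologicalComplex.homologyι_naturality_assoc]
  rw [Category.assoc]
  congr 1
  rw [← cancel_epi (HomologicalComplex.pOpcycles _ 0)]
  erw [HomologicalComplex.p_opcyclesMap_assoc, HomologicalComplex.p_descOpcycles,
    HomologicalComplex.p_descOpcycles_assoc]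
  show ((tensoringLeft (ModuleCat.{u} R)).obj A).map _ ≫
    ((tensoringLeft (ModuleCat.{u} R)).obj A).map _ = _
  exact (Functor.map_comp _ _ _).symm.trans
    ((congrArg _ (ProjectiveResolution.lift_commutes_zero f P Q)).trans (Functor.map_comp _ _ _))

lemma alpha_naturality {M : ModuleCat.{u} R} (w : ι ≫ p = 0) (P : ProjectiveResolution M) :
    HomologicalComplex.homologyMap (ses ι p w P).f 0 ≫ alpha F P =
      alpha K P ≫ ((tensoringLeft (ModuleCat.{u} R)).map ι).app M := by
  show HomologicalComplex.homologyMap ((NatTrans.mapHomologicalComplex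
    ((tensoringLeft (ModuleCat.{u} R)).map ι) (ComplexShape.down ℕ)).app P.complex) 0 ≫ alpha F P = _
  unfold alpha
  rw [HomologicalComplex.homologyι_naturality_assoc, Category.assoc]
  congr 1
  rw [← cancel_epi (HomologicalComplex.pOpcycles _ 0)]
  erw [HomologicalComplex.p_opcyclesMap_assoc, HomologicalComplex.p_descOpcycles,
    HomologicalComplex.p_descOpcycles_assoc]
  exact (whisker_exchange ι (P.π.f 0)).symm

lemma homologyMap_one_zero (w : ι ≫ p = 0) (hse : (ShortComplex.mk ι p w).ShortExact)
    [Module.Flat R F]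
    {M M' : ModuleCat.{u} R} (f : M ⟶ M')
    (P : ProjectiveResolution M) (Q : ProjectiveResolution M')
    (hAR : ∀ x : (((tensoringLeft (ModuleCat.{u} R)).obj K).obj M),
      ((tensoringLeft (ModuleCat.{u} R)).map ι).app M x = 0 →
      ((tensoringLeft (ModuleCat.{u} R)).obj K).map f x = 0) :
    HomologicalComplex.homologyMap (sesHom ι p w f P Q).τ₃ 1 = 0 := by
  have hP := ses_shortExact ι p w hse P
  have hQ := ses_shortExact ι p w hse Q
  have hrel : (ComplexShape.down ℕ).Rel 1 0 := by simp
  have hnat := HomologicalComplex.HomologySequence.δ_naturality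
    (sesHom ι p w f P Q) hP hQ 1 0 hrel
  have hz : IsZero ((ses ι p w Q).X₂.homology 1) := isZero_homology_tensor_flat F Q 0
  have hmono : Mono (hQ.δ 1 0 hrel) :=
    (hQ.homology_exact₃ 1 0 hrel).mono_g (hz.eq_of_src _ _)
  rw [← cancel_mono (hQ.δ 1 0 hrel), zero_comp, ← hnat]
  have hiso := isIso_alpha K Q
  refine (cancel_mono (alpha K Q)).mp ?_
  erw [zero_comp, Category.assoc]
  have e1 : HomologicalComplex.homologyMap (sesHom ι p w f P Q).τ₁ 0 ≫ alpha K Q =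
      alpha K P ≫ ((tensoringLeft (ModuleCat.{u} R)).obj K).map f :=
    homologyMap_alpha K f P Q
  erw [e1]
  have hcomp : hP.δ 1 0 hrel ≫ alpha K P ≫ ((tensoringLeft (ModuleCat.{u} R)).map ι).app M
      = 0 := by
    erw [← alpha_naturality ι p w P, ← Category.assoc, hP.δ_comp 1 0 hrel, zero_comp]
  ext x
  have h1 := congrArg (fun g => g.hom x) hcomp
  simp only [ModuleCat.hom_comp, LinearMap.comp_apply, ModuleCat.hom_zero, LinearMap.zero_apply] at h1 ⊢
  exact hAR _ h1

/-- Artin–Rees input, phrased elementwise for the tensored maps. -/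
lemma artinRees_input [IsNoetherianRing R] (I : Ideal R)
    (hinj : Function.Injective ι) [Module.Finite R F] :
    ∃ c : ℕ, ∀ i, c ≤ i →
      ∀ x : (((tensoringLeft (ModuleCat.{u} R)).obj K).obj (ModuleCat.of R (R ⧸ I ^ i))),
        ((tensoringLeft (ModuleCat.{u} R)).map ι).app (ModuleCat.of R (R ⧸ I ^ i)) x = 0 →
        ((tensoringLeft (ModuleCat.{u} R)).obj K).map
          (ModuleCat.ofHom (quotPowMap I (Nat.sub_le i c))) x = 0 := by
  obtain ⟨c, hc⟩ := Ideal.exists_pow_inf_eq_pow_smul I (LinearMap.range ι.hom)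
  refine ⟨c, fun i hi x hx => ?_⟩
  obtain ⟨k, hk⟩ := Submodule.Quotient.mk_surjective _
    (TensorProduct.tensorQuotEquivQuotSMul K (I ^ i) x)
  have hx1 : x = k ⊗ₜ[R] Ideal.Quotient.mk (I ^ i) 1 := by
    apply (TensorProduct.tensorQuotEquivQuotSMul K (I ^ i)).injective
    rw [TensorProduct.tensorQuotEquivQuotSMul_tmul_mk, one_smul]
    exact hk.symm
  have hιk : (ι k : F) ∈ (I ^ i • ⊤ : Submodule R F) := by
    have : ((tensoringLeft (ModuleCat.{u} R)).map ι).app (ModuleCat.of R (R ⧸ I ^ i)) x =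
        (ι k) ⊗ₜ[R] Ideal.Quotient.mk (I ^ i) 1 := by
      rw [hx1]
      exact ModuleCat.MonoidalCategory.whiskerRight_apply ι _ _ _
    rw [this] at hx
    have h0 := congrArg (TensorProduct.tensorQuotEquivQuotSMul F (I ^ i)) hx
    rw [TensorProduct.tensorQuotEquivQuotSMul_tmul_mk, one_smul, map_zero] at h0
    exact (Submodule.Quotient.mk_eq_zero _).mp h0
  have hk' : k ∈ (I ^ (i - c) • ⊤ : Submodule R K) := by
    have h1 : (ι k : F) ∈ I ^ (i - c) • ((I ^ c • ⊤ : Submodule R F) ⊓ LinearMap.range ι.hom) := by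
      rw [← hc i hi]
      exact ⟨hιk, ⟨k, rfl⟩⟩
    have h2 : I ^ (i - c) • ((I ^ c • ⊤ : Submodule R F) ⊓ LinearMap.range ι.hom) ≤
        Submodule.map ι.hom (I ^ (i - c) • ⊤) := by
      rw [Submodule.map_smul'', Submodule.map_top]
      exact Submodule.smul_mono le_rfl inf_le_right
    obtain ⟨k', hk'mem, hk'eq⟩ := h2 h1
    rwa [← hinj hk'eq]
  have hval : ((tensoringLeft (ModuleCat.{u} R)).obj K).map
      (ModuleCat.ofHom (quotPowMap I (Nat.sub_le i c))) x =
      k ⊗ₜ[R] Ideal.Quotient.mk (I ^ (i - c)) 1 := by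
    rw [hx1]
    have := ModuleCat.MonoidalCategory.whiskerLeft_apply K
      (ModuleCat.ofHom (quotPowMap I (Nat.sub_le i c))) k (Ideal.Quotient.mk (I ^ i) 1)
    refine this.trans ?_
    congr 1
  rw [hval]
  rw [← (TensorProduct.tensorQuotEquivQuotSMul (K : Type u) (I ^ (i - c))).map_eq_zero_iff
    (x := k ⊗ₜ[R] Ideal.Quotient.mk (I ^ (i - c)) 1)]
  rw [TensorProduct.tensorQuotEquivQuotSMul_tmul_mk, one_smul]
  exact (Submodule.Quotient.mk_eq_zero _).mpr hk'

lemma main_induction [IsNoetherianRing R] (I : Ideal R) (t : ℕ) (ht : 1 ≤ t) :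
    ∀ (N : ModuleCat.{u} R), Module.Finite R N →
    ∃ c : ℕ, ∀ i, c ≤ i →
      (((tensoringLeft (ModuleCat.{u} R)).obj N).leftDerived t).map
        (ModuleCat.ofHom (quotPowMap I (Nat.sub_le i c))) = 0 := by
  induction t, ht using Nat.le_induction with
  | base =>
    intro N hN
    obtain ⟨n, φ, hφ⟩ := Module.Finite.exists_fin' R N
    let Fm : ModuleCat.{u} R := ModuleCat.of R (Fin n → R)
    let Km : ModuleCat.{u} R := ModuleCat.of R (LinearMap.ker φ)
    let ι : Km ⟶ Fm := ModuleCat.ofHom (LinearMap.ker φ).subtype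
    let p : Fm ⟶ N := ModuleCat.ofHom φ
    have w : ι ≫ p = 0 := by
      ext ⟨x, hx⟩
      exact hx
    have hse : (ShortComplex.mk ι p w).ShortExact :=
      { exact := by
          rw [ShortComplex.moduleCat_exact_iff]
          exact fun x hx => ⟨⟨x, hx⟩, rfl⟩
        mono_f := (ModuleCat.mono_iff_injective _).mpr (Submodule.injective_subtype _)
        epi_g := (ModuleCat.epi_iff_surjective _).mpr hφ }
    have hinj : Function.Injective ι := Submodule.injective_subtype _
    haveI : Module.Finite R Fm := inferInstanceAs (Module.Finite R (Fin n → R))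
    obtain ⟨c, hc⟩ := artinRees_input ι I hinj
    refine ⟨c, fun i hi => ?_⟩
    haveI : Module.Flat R Fm := inferInstanceAs (Module.Flat R (Fin n → R))
    rw [derived_map_zero_iff _ 1 _ (res _) (res _)]
    exact homologyMap_one_zero ι p w hse _ (res _) (res _) (hc i hi)
  | succ s hs IH =>
    intro N hN
    obtain ⟨n, φ, hφ⟩ := Module.Finite.exists_fin' R N
    let Fm : ModuleCat.{u} R := ModuleCat.of R (Fin n → R)
    let Km : ModuleCat.{u} R := ModuleCat.of R (LinearMap.ker φ)
    let ι : Km ⟶ Fm := ModuleCat.ofHom (LinearMap.ker φ).subtype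
    let p : Fm ⟶ N := ModuleCat.ofHom φ
    have w : ι ≫ p = 0 := by
      ext ⟨x, hx⟩
      exact hx
    have hse : (ShortComplex.mk ι p w).ShortExact :=
      { exact := by
          rw [ShortComplex.moduleCat_exact_iff]
          exact fun x hx => ⟨⟨x, hx⟩, rfl⟩
        mono_f := (ModuleCat.mono_iff_injective _).mpr (Submodule.injective_subtype _)
        epi_g := (ModuleCat.epi_iff_surjective _).mpr hφ }
    have hKfin : Module.Finite R Km := by
      have : IsNoetherian R (Fin n → R) := inferInstance
      exact Module.Finite.iff_fg.mpr (IsNoetherian.noetherian _)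
    obtain ⟨c, hc⟩ := IH Km hKfin
    refine ⟨c, fun i hi => ?_⟩
    haveI : Module.Flat R Fm := inferInstanceAs (Module.Flat R (Fin n → R))
    rw [derived_map_zero_iff _ (s + 1) _ (res _) (res _)]
    refine homologyMap_succ_zero ι p w hse _ (res _) (res _) s ?_
    have h1 := hc i hi
    rw [derived_map_zero_iff _ s _ (res _) (res _)] at h1
    exact h1

end TorNilp

/-- Let `R` be a commutative Noetherian local ring with maximal ideal `𝔪`,
let `N` be a finitely generated `R`-module, and let `t ≥ 1`. Then there exists `i₀ ≥ 0` such
that for every `i ≥ i₀` the homomorphism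
`Tor_t^R(N, R/𝔪^i) → Tor_t^R(N, R/𝔪^{i−i₀})` induced by the canonical surjection
`R/𝔪^i → R/𝔪^{i−i₀}` is the zero map; that is, the inverse tower
`(Tor_t^R(N, R/𝔪^j))_j` is nilpotent. -/
theorem tor_tower_nilpotent {R : Type u} [CommRing R] [IsNoetherianRing R] [IsLocalRing R]
    (N : Type u) [AddCommGroup N] [Module R N] [Module.Finite R N]
    (t : ℕ) (ht : 1 ≤ t) :
    ∃ i₀ : ℕ, ∀ i, i₀ ≤ i →
      ((Tor (ModuleCat.{u} R) t).obj (ModuleCat.of R N)).map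
        (ModuleCat.ofHom (quotPowMap (IsLocalRing.maximalIdeal R) (Nat.sub_le i i₀))) = 0 := by
  obtain ⟨c, hc⟩ := TorNilp.main_induction (IsLocalRing.maximalIdeal R) t ht
    (ModuleCat.of R N) ‹Module.Finite R N›
  exact ⟨c, fun i hi => hc i hi⟩
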